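/- Let 0 < p < 1 and let Φ : ℕ → [0, ∞) be any nondecreasing, nonnegative function satisfying limsup_{n→∞} n^{1/p−1}/Φ(n) = ∞. Then there exists a martingale f₀ = (f₀^{(n)})_{n≥0} belonging to the martingale Hardy space H_p(G_m) such that limsup_{n→∞} |f̂₀(n)|/Φ(n) = ∞. -/

import Mathlib

open MeasureTheory Filter ENNReal Finset

noncomputable section

/-- The Vilenkin group `G_m`: complete direct product of cyclic groups `ℤ_{m_k}`. -/
abbrev Gm (m : ℕ → ℕ) : Type := ∀ k : ℕ, ZMod (m k)

/-- The generalized powers `M_0 = 1`, `M_{k+1} = m_k M_k`. -/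
def Mgen (m : ℕ → ℕ) : ℕ → ℕ
  | 0 => 1
  | k + 1 => m k * Mgen m k

/-- The digits of `n` in the generalized number system `n = Σ_j n_j M_j`. -/
def digit (m : ℕ → ℕ) (n j : ℕ) : ℕ := (n / Mgen m j) % m j

/-- The generalized Rademacher functions `r_k(x) = exp(2πi x_k / m_k)`. -/
def rade (m : ℕ → ℕ) (k : ℕ) (x : Gm m) : ℂ :=
  Complex.exp (2 * Real.pi * Complex.I * ((x k).val : ℂ) / (m k : ℂ))

/-- The Vilenkin system `ψ_n = Π_k r_k^{n_k}` (all digits `n_k` with `k > n` vanish). -/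
def psi (m : ℕ → ℕ) (n : ℕ) (x : Gm m) : ℂ :=
  ∏ k ∈ Finset.range (n + 1), rade m k x ^ digit m n k

/-- The cylinder `I_n(x) = {y : y_0 = x_0, ..., y_{n-1} = x_{n-1}}`. -/
def cyl (m : ℕ → ℕ) (n : ℕ) (x : Gm m) : Set (Gm m) := {y | ∀ j < n, y j = x j}

/-- Vilenkin–Fourier coefficient of an integrable function. -/
def fcoef (m : ℕ → ℕ) (μ : Measure (Gm m)) (f : Gm m → ℂ) (k : ℕ) : ℂ :=
  ∫ x, f x * (starRingEnd ℂ) (psi m k x) ∂μ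

/-- Partial sums of the Vilenkin–Fourier series of a function. -/
def Spart (m : ℕ → ℕ) (μ : Measure (Gm m)) (f : Gm m → ℂ) (n : ℕ) (x : Gm m) : ℂ :=
  ∑ k ∈ Finset.range n, fcoef m μ f k * psi m k x

/-- The Dirichlet kernels `D_n = Σ_{k<n} ψ_k`. -/
def Dker (m : ℕ → ℕ) (n : ℕ) (x : Gm m) : ℂ :=
  ∑ k ∈ Finset.range n, psi m k x

/-- `f = (f^{(n)})` is a martingale w.r.t. the filtration generated by the cylinders:
each `f^{(n)}` is integrable and, for `n ≤ k`, the conditional expectation of `f^{(k)}`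
on the `n`-th σ-algebra (the average on each cylinder `I_n(x)`) equals `f^{(n)}`. -/
def IsVMartingale (m : ℕ → ℕ) (μ : Measure (Gm m)) (f : ℕ → Gm m → ℂ) : Prop :=
  (∀ n, Integrable (f n) μ) ∧
  ∀ n k : ℕ, n ≤ k → ∀ x : Gm m, f n x = (Mgen m n : ℂ) * ∫ t in cyl m n x, f k t ∂μ

/-- Vilenkin–Fourier coefficient of a martingale: `lim_k ∫ f^{(k)} ψ̄_i dμ`; since the
integral is independent of `k` once `M_k > i`, and `M_{i+1} > i`, we take `k = i+1`. -/
def mfhat (m : ℕ → ℕ) (μ : Measure (Gm m)) (f : ℕ → Gm m → ℂ) (i : ℕ) : ℂ :=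
  ∫ x, f (i + 1) x * (starRingEnd ℂ) (psi m i x) ∂μ

/-- The `H_p` (quasi-)norm of a martingale: `‖sup_n |f^{(n)}|‖_{L^p(μ)}`, as an `ℝ≥0∞`. -/
def HpNorm (m : ℕ → ℕ) (μ : Measure (Gm m)) (p : ℝ) (f : ℕ → Gm m → ℂ) : ℝ≥0∞ :=
  (∫⁻ x, (⨆ n, (‖f n x‖₊ : ℝ≥0∞)) ^ p ∂μ) ^ (1 / p)


/-! ### Auxiliary lemmas -/

section Aux

variable {m : ℕ → ℕ}

lemma zmod_sum_val {M : ℕ} [NeZero M] (f : ℕ → ℂ) :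
    ∑ a : ZMod M, f a.val = ∑ i ∈ Finset.range M, f i := by
  refine Finset.sum_bij' (fun a _ => a.val) (fun i _ => (i : ZMod M)) ?_ ?_ ?_ ?_ ?_
  · intro a _; exact Finset.mem_range.2 (ZMod.val_lt a)
  · intro i _; exact Finset.mem_univ _
  · intro a _; exact ZMod.natCast_rightInverse a
  · intro i hi; exact ZMod.val_cast_of_lt (Finset.mem_range.1 hi)
  · intro a _; rfl

lemma sum_roots {M e : ℕ} (hM : 2 ≤ M) (he1 : 1 ≤ e) (he2 : e < M) :
    ∑ i ∈ Finset.range M, (Complex.exp (2 * Real.pi * Complex.I * e / M)) ^ i = 0 := by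
  have hMne : (M:ℂ) ≠ 0 := by exact_mod_cast (by omega : M ≠ 0)
  set z := Complex.exp (2 * Real.pi * Complex.I * e / M) with hz
  have h2 : (2 * Real.pi * Complex.I : ℂ) ≠ 0 := by
    simp [Real.pi_ne_zero, Complex.I_ne_zero]
  have hz1 : z ≠ 1 := by
    rw [hz, Ne, Complex.exp_eq_one_iff]
    rintro ⟨n, hn⟩
    have hn' : (2 * Real.pi * Complex.I) * ((e:ℂ) / M) = (2 * Real.pi * Complex.I) * n := by
      rw [← mul_div_assoc, hn]; ring
    have h3 : (e:ℂ) / M = n := mul_left_cancel₀ h2 hn'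
    have h4 : (e:ℂ) = (n:ℂ) * M := by field_simp at h3; linear_combination h3
    have h5 : (e:ℤ) = n * M := by exact_mod_cast h4
    have : (M:ℤ) ∣ e := ⟨n, by linarith [h5]⟩
    have := Int.le_of_dvd (by exact_mod_cast he1) this
    omega
  have hzM : z ^ M = 1 := by
    rw [hz, ← Complex.exp_nat_mul]
    have : (M:ℂ) * (2 * Real.pi * Complex.I * e / M) = e * (2 * Real.pi * Complex.I) := by
      field_simp
    rw [this, Complex.exp_nat_mul_two_pi_mul_I]
  rw [geom_sum_eq hz1, hzM, sub_self, zero_div]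

lemma Mgen_pos (hm : ∀ k, 2 ≤ m k) (k : ℕ) : 0 < Mgen m k := by
  induction k with
  | zero => simp [Mgen]
  | succ k ih =>
    have := hm k
    show 0 < m k * Mgen m k
    exact Nat.mul_pos (by omega) ih

lemma two_pow_le_Mgen (hm : ∀ k, 2 ≤ m k) (k : ℕ) : 2 ^ k ≤ Mgen m k := by
  induction k with
  | zero => simp [Mgen]
  | succ k ih =>
    have := hm k
    calc 2 ^ (k+1) = 2 * 2 ^ k := by ring
    _ ≤ m k * Mgen m k := Nat.mul_le_mul this ih
    _ = Mgen m (k+1) := rfl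

lemma Mgen_strictMono (hm : ∀ k, 2 ≤ m k) : StrictMono (Mgen m) := by
  apply strictMono_nat_of_lt_succ
  intro k
  have h1 := Mgen_pos hm k
  have := hm k
  calc Mgen m k = 1 * Mgen m k := (one_mul _).symm
  _ < m k * Mgen m k := by
    exact (Nat.mul_lt_mul_right h1).2 (by omega)

lemma lt_Mgen (hm : ∀ k, 2 ≤ m k) (k : ℕ) : k < Mgen m k :=
  lt_of_lt_of_le Nat.lt_two_pow_self (two_pow_le_Mgen hm k)

lemma Mgen_dvd (hm : ∀ k, 2 ≤ m k) {j k : ℕ} (h : j ≤ k) : Mgen m j ∣ Mgen m k := by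
  induction k with
  | zero => simp_all
  | succ k ih =>
    rcases Nat.lt_succ_iff_lt_or_eq.1 (Nat.lt_succ_of_le h) with h' | h'
    · exact (ih (by omega)).mul_left _
    · subst h'; rfl

lemma digit_Mgen_self (hm : ∀ k, 2 ≤ m k) (A : ℕ) : digit m (Mgen m A) A = 1 := by
  unfold digit
  rw [Nat.div_self (Mgen_pos hm A)]
  exact Nat.one_mod_eq_one.2 (by have := hm A; omega)

lemma digit_Mgen_ne (hm : ∀ k, 2 ≤ m k) {A j : ℕ} (h : j ≠ A) : digit m (Mgen m A) j = 0 := by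
  unfold digit
  rcases lt_or_gt_of_ne h with h' | h'
  · obtain ⟨t, ht⟩ := Mgen_dvd hm (show j + 1 ≤ A by omega)
    have : Mgen m A / Mgen m j = m j * t := by
      rw [ht]
      show m j * Mgen m j * t / Mgen m j = m j * t
      rw [Nat.mul_comm (m j) (Mgen m j), Nat.mul_assoc, Nat.mul_div_cancel_left _ (Mgen_pos hm j)]
    rw [this, Nat.mul_mod_right]
  · rw [Nat.div_eq_of_lt (Mgen_strictMono hm h'), Nat.zero_mod]

lemma psi_Mgen (hm : ∀ k, 2 ≤ m k) (A : ℕ) (x : Gm m) :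
    psi m (Mgen m A) x = rade m A x := by
  unfold psi
  rw [Finset.prod_eq_single A]
  · rw [digit_Mgen_self hm, pow_one]
  · intro b _ hb; rw [digit_Mgen_ne hm hb, pow_zero]
  · intro h
    exact absurd (Finset.mem_range.2 (by have := lt_Mgen hm A; omega)) h

lemma rade_pow_card (hm : ∀ k, 2 ≤ m k) (A : ℕ) (x : Gm m) :
    rade m A x ^ (m A) = 1 := by
  unfold rade
  rw [← Complex.exp_nat_mul]
  have hne : (m A : ℂ) ≠ 0 := by
    have := hm A; exact_mod_cast (by omega : m A ≠ 0)
  have : (m A : ℂ) * (2 * Real.pi * Complex.I * ((x A).val : ℂ) / (m A : ℂ))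
      = ((x A).val : ℕ) * (2 * Real.pi * Complex.I) := by
    field_simp
  rw [this, Complex.exp_nat_mul_two_pi_mul_I]

lemma conj_rade (hm : ∀ k, 2 ≤ m k) (A : ℕ) (x : Gm m) :
    (starRingEnd ℂ) (rade m A x) = rade m A x ^ (m A - 1) := by
  have h1 : rade m A x * rade m A x ^ (m A - 1) = 1 := by
    rw [← pow_succ']
    have : m A - 1 + 1 = m A := by have := hm A; omega
    rw [this, rade_pow_card hm]
  have habs : ‖rade m A x‖ = 1 := by
    unfold rade
    rw [Complex.norm_exp]
    have : (2 * Real.pi * Complex.I * ((x A).val : ℂ) / (m A : ℂ)).re = 0 := by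
      simp [Complex.div_re, Complex.mul_re, Complex.mul_im]
    rw [this, Real.exp_zero]
  have hinv : (starRingEnd ℂ) (rade m A x) = (rade m A x)⁻¹ := by
    rw [Complex.inv_def]
    rw [Complex.normSq_eq_norm_sq, habs]
    simp
  rw [hinv, eq_comm]
  exact eq_inv_of_mul_eq_one_left (by linear_combination h1)

lemma norm_rade (A : ℕ) (x : Gm m) : ‖rade m A x‖ = 1 := by
  unfold rade
  rw [Complex.norm_exp]
  have : (2 * Real.pi * Complex.I * ((x A).val : ℂ) / (m A : ℂ)).re = 0 := by
    simp [Complex.div_re, Complex.mul_re, Complex.mul_im]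
  rw [this, Real.exp_zero]

lemma measurable_rade (hm : ∀ k, 2 ≤ m k) (k : ℕ) : Measurable (rade m k) := by
  haveI : NeZero (m k) := ⟨by have := hm k; omega⟩
  unfold rade
  exact Complex.measurable_exp.comp
    ((measurable_of_countable
      (fun z : ZMod (m k) => 2 * Real.pi * Complex.I * (z.val : ℂ) / (m k : ℂ))).comp
      (measurable_pi_apply k))

lemma measurableSet_cyl (hm : ∀ k, 2 ≤ m k) (n : ℕ) (x : Gm m) :
    MeasurableSet (cyl m n x) := by
  have hc : cyl m n x = ⋂ (j : ℕ) (_ : j < n), (fun y : Gm m => y j) ⁻¹' {x j} := by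
    ext y; simp [cyl]
  rw [hc]
  refine MeasurableSet.iInter fun j => MeasurableSet.iInter fun hj => ?_
  haveI : NeZero (m j) := ⟨by have := hm j; omega⟩
  exact (measurable_pi_apply j) (measurableSet_singleton _)

lemma cyl_zero (x : Gm m) : cyl m 0 x = Set.univ := by
  ext y; simp [cyl]

lemma mem_cyl_update {n : ℕ} {x y : Gm m} {a : ZMod (m n)} :
    y ∈ cyl m (n+1) (Function.update x n a) ↔ (y ∈ cyl m n x ∧ y n = a) := by
  constructor
  · intro h
    refine ⟨fun j hj => ?_, ?_⟩
    · have hjn : j ≠ n := by omega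
      have := h j (by omega)
      rwa [Function.update_of_ne hjn] at this
    · have := h n (by omega)
      rwa [Function.update_self] at this
  · rintro ⟨h1, h2⟩ j hj
    rcases Nat.lt_succ_iff_lt_or_eq.1 hj with h' | h'
    · have hjn : j ≠ n := by omega
      rw [Function.update_of_ne hjn]; exact h1 j h'
    · subst h'; rw [Function.update_self]; exact h2

lemma cyl_eq_iUnion (n : ℕ) (x : Gm m) :
    cyl m n x = ⋃ a : ZMod (m n), cyl m (n+1) (Function.update x n a) := by
  ext y
  simp only [Set.mem_iUnion]
  constructor
  · intro h; exact ⟨y n, mem_cyl_update.2 ⟨h, rfl⟩⟩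
  · rintro ⟨a, ha⟩; exact (mem_cyl_update.1 ha).1

lemma setIntegral_cyl_split (hm : ∀ k, 2 ≤ m k) (μ : Measure (Gm m))
    {g : Gm m → ℂ} (hg : Integrable g μ) (n : ℕ) [NeZero (m n)] (x : Gm m) :
    ∫ y in cyl m n x, g y ∂μ
      = ∑ a : ZMod (m n), ∫ y in cyl m (n+1) (Function.update x n a), g y ∂μ := by
  rw [cyl_eq_iUnion n x, integral_iUnion (fun a => measurableSet_cyl hm _ _)
    ?_ hg.integrableOn]
  · exact tsum_fintype _
  · intro a b hab
    refine Set.disjoint_left.2 fun y hy hy' => hab ?_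
    rw [← (mem_cyl_update.1 hy).2, ← (mem_cyl_update.1 hy').2]

lemma setIntegral_cyl_const (hm : ∀ k, 2 ≤ m k) (μ : Measure (Gm m))
    (hμ : ∀ n x, μ (cyl m n x) = ((Mgen m n : ℝ≥0∞))⁻¹)
    {g : Gm m → ℂ} {n : ℕ} (hg : ∀ y z : Gm m, (∀ i < n, y i = z i) → g y = g z)
    (x : Gm m) :
    ∫ y in cyl m n x, g y ∂μ = ((Mgen m n : ℂ))⁻¹ * g x := by
  have h1 : ∫ y in cyl m n x, g y ∂μ = ∫ _ in cyl m n x, g x ∂μ := by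
    refine setIntegral_congr_fun (measurableSet_cyl hm n x) fun y hy => ?_
    exact hg y x hy
  rw [h1, setIntegral_const, measureReal_def, hμ]
  rw [ENNReal.toReal_inv]
  simp only [ENNReal.toReal_natCast]
  rw [Complex.real_smul]
  push_cast
  ring

lemma setIntegral_mul_rade_zero (hm : ∀ k, 2 ≤ m k) (μ : Measure (Gm m))
    (hμ : ∀ n x, μ (cyl m n x) = ((Mgen m n : ℝ≥0∞))⁻¹)
    {A e : ℕ} (he1 : 1 ≤ e) (he2 : e < m A)
    {h : Gm m → ℂ} (hh : ∀ y z : Gm m, (∀ i < A, y i = z i) → h y = h z)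
    (hint : Integrable (fun y => h y * rade m A y ^ e) μ) :
    ∀ n, n ≤ A → ∀ x : Gm m, ∫ y in cyl m n x, h y * rade m A y ^ e ∂μ = 0 := by
  suffices H : ∀ d n, A = n + d → ∀ x : Gm m,
      ∫ y in cyl m n x, h y * rade m A y ^ e ∂μ = 0 by
    intro n hn x; exact H (A - n) n (by omega) x
  intro d
  induction d with
  | zero =>
    intro n hA x
    have hnA : A = n := by omega
    subst hnA
    haveI : NeZero (m A) := ⟨by have := hm A; omega⟩
    rw [setIntegral_cyl_split hm μ hint A x]
    have hterm : ∀ a : ZMod (m A),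
        ∫ y in cyl m (A+1) (Function.update x A a), h y * rade m A y ^ e ∂μ
        = ((Mgen m (A+1) : ℂ))⁻¹ * (h x *
            (Complex.exp (2 * Real.pi * Complex.I * (e:ℂ) / (m A : ℂ))) ^ (a.val)) := by
      intro a
      rw [setIntegral_cyl_const hm μ hμ (n := A+1)
        (g := fun y => h y * rade m A y ^ e) ?_ (Function.update x A a)]
      · congr 1
        have h1 : h (Function.update x A a) = h x :=
          hh _ _ (fun i hi => Function.update_of_ne (by omega) _ _)
        rw [h1]
        congr 1
        unfold rade
        rw [Function.update_self]
        rw [← Complex.exp_nat_mul, ← Complex.exp_nat_mul]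
        congr 1
        push_cast
        ring
      · intro y z hyz
        have h2 : rade m A y = rade m A z := by
          unfold rade; rw [hyz A (by omega)]
        rw [hh y z (fun i hi => hyz i (by omega)), h2]
    rw [Finset.sum_congr rfl fun a _ => hterm a, ← Finset.mul_sum, ← Finset.mul_sum]
    rw [zmod_sum_val (fun v => (Complex.exp (2 * Real.pi * Complex.I * (e:ℂ) / (m A : ℂ))) ^ v)]
    rw [sum_roots (hm A) he1 he2, mul_zero, mul_zero]
  | succ d ih =>
    intro n hA x
    haveI : NeZero (m n) := ⟨by have := hm n; omega⟩
    rw [setIntegral_cyl_split hm μ hint n x]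
    exact Finset.sum_eq_zero fun a _ => ih (n+1) (by omega) _

lemma ennreal_sum_rpow_le {p : ℝ} (hp0 : 0 < p) (hp1 : p ≤ 1) (v : ℕ → ℝ≥0∞) (n : ℕ) :
    (∑ k ∈ Finset.range n, v k) ^ p ≤ ∑ k ∈ Finset.range n, (v k) ^ p := by
  induction n with
  | zero => simp [ENNReal.zero_rpow_of_pos hp0]
  | succ n ih =>
    rw [Finset.sum_range_succ, Finset.sum_range_succ]
    exact le_trans (ENNReal.rpow_add_le_add_rpow _ _ hp0.le hp1) (by gcongr)

lemma ennreal_iSup_rpow {p : ℝ} (hp0 : 0 < p) (S : ℕ → ℝ≥0∞) :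
    (⨆ n, S n) ^ p = ⨆ n, S n ^ p := by
  have h := (ENNReal.orderIsoRpow p hp0).map_iSup S
  simpa only [ENNReal.orderIsoRpow_apply] using h

lemma integrable_bdd (μ : Measure (Gm m)) [IsFiniteMeasure μ] {g : Gm m → ℂ}
    (hg : Measurable g) (C : ℝ) (hC : ∀ x, ‖g x‖ ≤ C) : Integrable g μ :=
  (integrable_const C).mono' hg.aestronglyMeasurable (Filter.Eventually.of_forall hC)

end Aux

/-- For `0 < p < 1` and any nondecreasing nonnegative `Φ` with
`limsup_n n^{1/p-1}/Φ(n) = ∞`, there exists a martingale `f₀ ∈ H_p(G_m)` with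
`limsup_n |f̂₀(n)|/Φ(n) = ∞`. -/
theorem exists_martingale_large_fourier_coefficients
    (m : ℕ → ℕ) (hm : ∀ k, 2 ≤ m k) (lam : ℕ) (hlam : ∀ k, m k ≤ lam)
    (μ : Measure (Gm m)) (hμ : ∀ n x, μ (cyl m n x) = ((Mgen m n : ℝ≥0∞))⁻¹)
    (p : ℝ) (hp0 : 0 < p) (hp1 : p < 1)
    (Φ : ℕ → ℝ) (hΦ0 : ∀ n, 0 ≤ Φ n) (hΦmono : Monotone Φ)
    (hΦ : Filter.limsup
      (fun n : ℕ => ENNReal.ofReal ((n : ℝ) ^ (1 / p - 1)) / ENNReal.ofReal (Φ n))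
      Filter.atTop = ⊤) :
    ∃ f : ℕ → Gm m → ℂ, IsVMartingale m μ f ∧ HpNorm m μ p f < ⊤ ∧
      Filter.limsup
        (fun n : ℕ => ENNReal.ofReal ‖mfhat m μ f n‖ / ENNReal.ofReal (Φ n))
        Filter.atTop = ⊤ := by
  classical
  haveI hNZ : ∀ k, NeZero (m k) := fun k => ⟨by have := hm k; omega⟩
  haveI hPM : IsProbabilityMeasure μ := ⟨by
    have h0 := hμ 0 (fun k => 0)
    rw [cyl_zero] at h0
    simpa [Mgen] using h0⟩
  set q : ℝ := 1/p - 1 with hqdef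
  have hq : 0 < q := by
    have h1 : 1 < 1/p := by rw [lt_div_iff₀ hp0]; linarith
    simp only [hqdef]; linarith
  have hlam2 : 2 ≤ lam := le_trans (hm 0) (hlam 0)
  -- selection of scales
  have hsel : ∀ (k N : ℕ), ∃ n, N ≤ n ∧
      ENNReal.ofReal ((lam:ℝ)^q * 4^k) ≤
        ENNReal.ofReal ((n : ℝ) ^ (1 / p - 1)) / ENNReal.ofReal (Φ n) := by
    intro k N
    rw [Filter.limsup_eq_iInf_iSup_of_nat] at hΦ
    have h1 : (⨆ i, ⨆ (_ : i ≥ N),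
        ENNReal.ofReal ((i : ℝ) ^ (1 / p - 1)) / ENNReal.ofReal (Φ i)) = ⊤ :=
      top_unique (hΦ ▸ iInf_le _ N)
    have h2 : ENNReal.ofReal ((lam:ℝ)^q * 4^k) < ⨆ i, ⨆ (_ : i ≥ N),
        ENNReal.ofReal ((i : ℝ) ^ (1 / p - 1)) / ENNReal.ofReal (Φ i) := by
      rw [h1]; exact ENNReal.ofReal_lt_top
    rw [lt_iSup_iff] at h2
    obtain ⟨i, h2⟩ := h2
    rw [lt_iSup_iff] at h2
    obtain ⟨hiN, h2⟩ := h2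
    exact ⟨i, hiN, h2.le⟩
  choose F hF1 hF2 using hsel
  -- the A function
  set Af : ℕ → ℕ := fun n => Nat.findGreatest (fun A => Mgen m A ≤ n) n with hAfdef
  have hAf1 : ∀ n, 1 ≤ n → Mgen m (Af n) ≤ n := by
    intro n hn
    exact Nat.findGreatest_spec (P := fun A => Mgen m A ≤ n) (m := 0) (Nat.zero_le n) (by simpa [Mgen] using hn)
  have hAf2 : ∀ n, n < Mgen m (Af n + 1) := by
    intro n
    by_contra hcon
    push_neg at hcon
    have hle : Af n + 1 ≤ n := le_trans (lt_Mgen hm (Af n + 1)).le hcon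
    exact Nat.findGreatest_is_greatest (Nat.lt_succ_self _) hle hcon
  -- the sequences
  set nseq : ℕ → ℕ := fun k =>
    Nat.rec (F 0 1) (fun k prev => F (k+1) (Mgen m (Af prev + 1))) k with hnseqdef
  have hnseqS : ∀ k, nseq (k+1) = F (k+1) (Mgen m (Af (nseq k) + 1)) := fun k => rfl
  set A : ℕ → ℕ := fun k => Af (nseq k) with hAdef
  have hn1 : ∀ k, 1 ≤ nseq k := by
    intro k
    cases k with
    | zero => exact hF1 0 1
    | succ k => exact le_trans (Mgen_pos hm _) (by rw [hnseqS]; exact hF1 _ _)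
  have hA1 : ∀ k, Mgen m (A k) ≤ nseq k := fun k => hAf1 _ (hn1 k)
  have hA2 : ∀ k, nseq k < Mgen m (A k + 1) := fun k => hAf2 _
  have hAmono : ∀ k, A k < A (k+1) := by
    intro k
    have h1 : Mgen m (A k + 1) ≤ nseq (k+1) := by rw [hnseqS]; exact hF1 _ _
    have h2 := hA2 (k+1)
    have h3 := lt_of_le_of_lt h1 h2
    have h4 := (Mgen_strictMono hm).lt_iff_lt.1 h3
    omega
  have hAk : ∀ k, k ≤ A k := by
    intro k
    induction k with
    | zero => exact Nat.zero_le _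
    | succ k ih => have := hAmono k; omega
  have hAinj : Function.Injective A := by
    have : StrictMono A := strictMono_nat_of_lt_succ hAmono
    exact this.injective
  have hMApos : ∀ k, (0:ℝ) < (Mgen m (A k) : ℝ) := by
    intro k; exact_mod_cast Mgen_pos hm (A k)
  -- the coefficients
  set c : ℕ → ℝ := fun k => (Mgen m (A k) : ℝ) ^ q / 2 ^ k with hcdef
  have hc_pos : ∀ k, 0 < c k := by
    intro k
    apply div_pos (Real.rpow_pos_of_pos (hMApos k) q)
    positivity
  -- the building blocks and the martingale
  set g : ℕ → Gm m → ℂ := fun k =>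
    Set.indicator (cyl m (A k) (fun _ => 0))
      (fun x => ((c k * (Mgen m (A k) : ℝ) : ℝ) : ℂ) * rade m (A k) x) with hgdef
  set f : ℕ → Gm m → ℂ := fun N x =>
    ∑ j ∈ Finset.range N, if A j + 1 ≤ N then g j x else 0 with hfdef
  -- basic facts about g
  have hg_eq : ∀ k (y : Gm m), g k y =
      Set.indicator (cyl m (A k) (fun _ => 0))
        (fun _ => ((c k * (Mgen m (A k) : ℝ) : ℝ) : ℂ)) y * rade m (A k) y := by
    intro k y
    by_cases hy : y ∈ cyl m (A k) (fun _ => 0)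
    · rw [hgdef]; simp [Set.indicator_of_mem hy]
    · rw [hgdef]; simp [Set.indicator_of_notMem hy]
  have hg_meas : ∀ k, Measurable (g k) := by
    intro k
    exact (measurable_const.mul (measurable_rade hm (A k))).indicator
      (measurableSet_cyl hm _ _)
  have hg_bound : ∀ k (x : Gm m), ‖g k x‖ ≤ c k * (Mgen m (A k) : ℝ) := by
    intro k x
    by_cases hx : x ∈ cyl m (A k) (fun _ => 0)
    · rw [hgdef]
      simp only [Set.indicator_of_mem hx]
      rw [norm_mul, norm_rade, mul_one, Complex.norm_real, Real.norm_eq_abs,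
        abs_of_nonneg (by positivity : (0:ℝ) ≤ c k * (Mgen m (A k) : ℝ))]
    · rw [hgdef]
      simp only [Set.indicator_of_notMem hx, norm_zero]
      positivity
  have hg_int : ∀ k, Integrable (g k) μ :=
    fun k => integrable_bdd μ (hg_meas k) _ (hg_bound k)
  have hg_dep : ∀ k (y z : Gm m), (∀ i < A k + 1, y i = z i) → g k y = g k z := by
    intro k y z hyz
    have hmem : y ∈ cyl m (A k) (fun _ => 0) ↔ z ∈ cyl m (A k) (fun _ => 0) := by
      constructor
      · intro h j hj; rw [← hyz j (by omega)]; exact h j hj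
      · intro h j hj; rw [hyz j (by omega)]; exact h j hj
    have hr : rade m (A k) y = rade m (A k) z := by
      unfold rade; rw [hyz (A k) (by omega)]
    by_cases hy : y ∈ cyl m (A k) (fun _ => 0)
    · rw [hgdef]
      simp only [Set.indicator_of_mem hy, Set.indicator_of_mem (hmem.1 hy), hr]
    · rw [hgdef]
      simp only [Set.indicator_of_notMem hy, Set.indicator_of_notMem (fun h => hy (hmem.2 h))]
  have hind_dep : ∀ k (y z : Gm m), (∀ i < A k, y i = z i) →
      Set.indicator (cyl m (A k) (fun _ => 0))
        (fun _ => ((c k * (Mgen m (A k) : ℝ) : ℝ) : ℂ)) y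
      = Set.indicator (cyl m (A k) (fun _ => 0))
        (fun _ => ((c k * (Mgen m (A k) : ℝ) : ℝ) : ℂ)) z := by
    intro k y z hyz
    have hmem : y ∈ cyl m (A k) (fun _ => 0) ↔ z ∈ cyl m (A k) (fun _ => 0) := by
      constructor
      · intro h j hj; rw [← hyz j hj]; exact h j hj
      · intro h j hj; rw [hyz j hj]; exact h j hj
    by_cases hy : y ∈ cyl m (A k) (fun _ => 0)
    · simp only [Set.indicator_of_mem hy, Set.indicator_of_mem (hmem.1 hy)]
    · simp only [Set.indicator_of_notMem hy, Set.indicator_of_notMem (fun h => hy (hmem.2 h))]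
  have hf_int : ∀ N, Integrable (f N) μ := by
    intro N
    rw [hfdef]
    apply integrable_finset_sum
    intro j _
    by_cases hj : A j + 1 ≤ N
    · simpa [hj] using hg_int j
    · simpa [hj] using integrable_zero (Gm m) ℂ μ
  have hterm_meas : ∀ j (e : ℕ) (cond : Prop) [Decidable cond], Measurable
      (fun x => (if cond then g j x else 0) * rade m (A 0) x ^ e) := by
    intro j e cond _
    by_cases hc : cond
    · simp only [if_pos hc]
      exact (hg_meas j).mul ((measurable_rade hm _).pow_const e)
    · simp only [if_neg hc, zero_mul]
      exact measurable_const
  have hfourier : ∀ k, mfhat m μ f (Mgen m (A k)) = ((c k : ℝ) : ℂ) := by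
    intro k
    have hiA : A k < Mgen m (A k) := lt_Mgen hm (A k)
    have hm1 : m (A k) - 1 + 1 = m (A k) := by have := hm (A k); omega
    have hexp : (fun x => f (Mgen m (A k) + 1) x * (starRingEnd ℂ) (psi m (Mgen m (A k)) x))
        = fun x => ∑ j ∈ Finset.range (Mgen m (A k) + 1),
            (if A j + 1 ≤ Mgen m (A k) + 1 then g j x else 0)
              * rade m (A k) x ^ (m (A k) - 1) := by
      funext x
      rw [psi_Mgen hm, conj_rade hm, hfdef]
      exact Finset.sum_mul _ _ _
    have hints : ∀ j, Integrable (fun x => (if A j + 1 ≤ Mgen m (A k) + 1 then g j x else 0)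
        * rade m (A k) x ^ (m (A k) - 1)) μ := by
      intro j
      refine integrable_bdd μ ?_ (c j * (Mgen m (A j) : ℝ)) ?_
      · by_cases hc : A j + 1 ≤ Mgen m (A k) + 1
        · simp only [if_pos hc]
          exact (hg_meas j).mul ((measurable_rade hm _).pow_const _)
        · simp only [if_neg hc, zero_mul]
          exact measurable_const
      · intro x
        rw [norm_mul, norm_pow, norm_rade, one_pow, mul_one]
        by_cases hc : A j + 1 ≤ Mgen m (A k) + 1
        · rw [if_pos hc]; exact hg_bound j x
        · rw [if_neg hc, norm_zero]
          have := hc_pos j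
          have := hMApos j
          positivity
    show (∫ x, f (Mgen m (A k) + 1) x * (starRingEnd ℂ) (psi m (Mgen m (A k)) x) ∂μ) = _
    rw [hexp, integral_finset_sum _ (fun j _ => hints j)]
    rw [Finset.sum_eq_single k]
    · -- the k-th term equals c k
      have hcond : A k + 1 ≤ Mgen m (A k) + 1 := by omega
      have heq : (fun x => (if A k + 1 ≤ Mgen m (A k) + 1 then g k x else 0)
          * rade m (A k) x ^ (m (A k) - 1))
          = Set.indicator (cyl m (A k) (fun _ => 0))
              (fun _ => ((c k * (Mgen m (A k) : ℝ) : ℝ) : ℂ)) := by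
        funext x
        rw [if_pos hcond, hg_eq k x, mul_assoc, ← pow_succ', hm1, rade_pow_card hm, mul_one]
      rw [heq, integral_indicator (measurableSet_cyl hm _ _), setIntegral_const, measureReal_def, hμ]
      rw [ENNReal.toReal_inv]
      simp only [ENNReal.toReal_natCast]
      rw [Complex.real_smul]
      push_cast
      have hMAne : ((Mgen m (A k) : ℕ) : ℂ) ≠ 0 := by
        exact_mod_cast (Mgen_pos hm (A k)).ne'
      rw [mul_comm, mul_assoc, mul_inv_cancel₀ hMAne, mul_one]
    · -- other terms vanish
      intro j _ hjk
      by_cases hcond : A j + 1 ≤ Mgen m (A k) + 1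
      · have hAjk : A j ≠ A k := fun h => hjk (hAinj h)
        have heqj : (fun x => (if A j + 1 ≤ Mgen m (A k) + 1 then g j x else 0)
            * rade m (A k) x ^ (m (A k) - 1))
            = fun x => g j x * rade m (A k) x ^ (m (A k) - 1) := by
          funext x; rw [if_pos hcond]
        rw [heqj]
        have huniv : ∀ (F : Gm m → ℂ), (∫ x, F x ∂μ) = ∫ x in cyl m 0 (fun _ => 0), F x ∂μ := by
          intro F; rw [cyl_zero, setIntegral_univ]
        rcases lt_or_gt_of_ne hAjk with hlt | hgt
        · -- A j < A k
          have hint2 : Integrable (fun y => g j y * rade m (A k) y ^ (m (A k) - 1)) μ := by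
            refine integrable_bdd μ ((hg_meas j).mul ((measurable_rade hm _).pow_const _))
              (c j * (Mgen m (A j) : ℝ)) ?_
            intro x
            rw [norm_mul, norm_pow, norm_rade, one_pow, mul_one]
            exact hg_bound j x
          have hz := setIntegral_mul_rade_zero hm μ hμ (A := A k) (e := m (A k) - 1)
            (by have := hm (A k); omega) (by omega)
            (fun y z hyz => hg_dep j y z (fun i hi => hyz i (by omega)))
            hint2 0 (Nat.zero_le _) (fun _ => 0)
          rw [huniv, hz]
        · -- A j > A k
          set h2 : Gm m → ℂ := fun y =>
            Set.indicator (cyl m (A j) (fun _ => 0))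
              (fun _ => ((c j * (Mgen m (A j) : ℝ) : ℝ) : ℂ)) y
              * rade m (A k) y ^ (m (A k) - 1) with hh2def
          have heq2 : (fun y => g j y * rade m (A k) y ^ (m (A k) - 1))
              = fun y => h2 y * rade m (A j) y ^ 1 := by
            funext y
            rw [hh2def, hg_eq j y, pow_one]
            ring
          have hdep2 : ∀ y z : Gm m, (∀ i < A j, y i = z i) → h2 y = h2 z := by
            intro y z hyz
            rw [hh2def]
            have hr : rade m (A k) y = rade m (A k) z := by
              unfold rade; rw [hyz (A k) hgt]
            simp only []
            rw [hind_dep j y z hyz, hr]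
          have hint2 : Integrable (fun y => h2 y * rade m (A j) y ^ 1) μ := by
            rw [← heq2]
            refine integrable_bdd μ ((hg_meas j).mul ((measurable_rade hm _).pow_const _))
              (c j * (Mgen m (A j) : ℝ)) ?_
            intro x
            rw [norm_mul, norm_pow, norm_rade, one_pow, mul_one]
            exact hg_bound j x
          have hz := setIntegral_mul_rade_zero hm μ hμ (A := A j) (e := 1)
            le_rfl (by have := hm (A j); omega) hdep2 hint2 0 (Nat.zero_le _) (fun _ => 0)
          rw [heq2, huniv, hz]
      · simp only [if_neg hcond, zero_mul, integral_zero]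
    · intro hk
      exact absurd (Finset.mem_range.2 (by have := hAk k; omega)) hk
  refine ⟨f, ⟨hf_int, ?mart⟩, ?hp, ?lim⟩
  case mart =>
    intro n k hnk x
    have hMne : (Mgen m n : ℂ) ≠ 0 := by
      have := Mgen_pos hm n
      exact_mod_cast (by omega : Mgen m n ≠ 0)
    have hterm_int : ∀ j, Integrable (fun y => if A j + 1 ≤ k then g j y else 0) μ := by
      intro j
      by_cases hj : A j + 1 ≤ k
      · simpa [hj] using hg_int j
      · simpa [hj] using integrable_zero (Gm m) ℂ μ
    have hsplit : ∫ t in cyl m n x, f k t ∂μ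
        = ∑ j ∈ Finset.range k, ∫ t in cyl m n x, (if A j + 1 ≤ k then g j t else 0) ∂μ := by
      rw [hfdef]
      exact integral_finset_sum _ (fun j _ => (hterm_int j).integrableOn)
    have hval : ∀ j, (Mgen m n : ℂ) * ∫ t in cyl m n x, (if A j + 1 ≤ k then g j t else 0) ∂μ
        = (if A j + 1 ≤ n then g j x else 0) := by
      intro j
      by_cases hjk : A j + 1 ≤ k
      · simp only [if_pos hjk]
        by_cases hjn : A j + 1 ≤ n
        · rw [setIntegral_cyl_const hm μ hμ (n := n) (g := g j)
            (fun y z hyz => hg_dep j y z (fun i hi => hyz i (by omega))) x]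
          rw [if_pos hjn, ← mul_assoc, mul_inv_cancel₀ hMne, one_mul]
        · have hnAj : n ≤ A j := by omega
          have hgr : (fun y => Set.indicator (cyl m (A j) (fun _ => 0))
              (fun _ => ((c j * (Mgen m (A j) : ℝ) : ℝ) : ℂ)) y * rade m (A j) y ^ 1)
              = g j := by
            funext y; rw [pow_one, ← hg_eq]
          have hint1 : Integrable (fun y => Set.indicator (cyl m (A j) (fun _ => 0))
              (fun _ => ((c j * (Mgen m (A j) : ℝ) : ℝ) : ℂ)) y * rade m (A j) y ^ 1) μ := by
            rw [hgr]; exact hg_int j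
          have hzero := setIntegral_mul_rade_zero hm μ hμ (A := A j) (e := 1)
            le_rfl (by have := hm (A j); omega) (hind_dep j) hint1 n hnAj x
          rw [hgr] at hzero
          rw [hzero, mul_zero, if_neg hjn]
      · simp only [if_neg hjk]
        rw [integral_zero, mul_zero, if_neg (fun h => hjk (le_trans h hnk))]
    calc f n x = ∑ j ∈ Finset.range k, (if A j + 1 ≤ n then g j x else 0) := by
          rw [hfdef]
          refine Finset.sum_subset (Finset.range_subset_range.2 hnk) ?_
          intro j hj hjn
          have : n ≤ j := by
            by_contra hc; exact hjn (Finset.mem_range.2 (by omega))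
          have := hAk j
          rw [if_neg (by omega)]
      _ = (Mgen m n : ℂ) * ∫ t in cyl m n x, f k t ∂μ := by
          rw [hsplit, Finset.mul_sum]
          exact (Finset.sum_congr rfl fun j _ => hval j).symm
  case hp =>
    have hpos : ∀ k, (0:ℝ) ≤ c k * (Mgen m (A k) : ℝ) := by
      intro k; have := hc_pos k; have := hMApos k; positivity
    set s2 : ℝ := ((1:ℝ)/2) ^ p with hs2def
    have hs2nonneg : (0:ℝ) ≤ s2 := by rw [hs2def]; positivity
    have hs2lt : s2 < 1 := by
      rw [hs2def]; exact Real.rpow_lt_one (by norm_num) (by norm_num) hp0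
    set rr : ℝ≥0∞ := ENNReal.ofReal s2 with hrrdef
    have hrrlt : rr < 1 := ENNReal.ofReal_lt_one.2 hs2lt
    set T2 : Gm m → ℝ≥0∞ := fun x =>
      ∑' k, Set.indicator (cyl m (A k) (fun _ => 0))
        (fun _ => ENNReal.ofReal (c k * (Mgen m (A k) : ℝ)) ^ p) x with hT2def
    -- pointwise bound
    have hptwise : ∀ x, (⨆ N, (‖f N x‖₊ : ℝ≥0∞)) ^ p ≤ T2 x := by
      intro x
      set S : ℕ → ℝ≥0∞ := fun N =>
        ∑ k ∈ Finset.range N, Set.indicator (cyl m (A k) (fun _ => 0))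
          (fun _ => ENNReal.ofReal (c k * (Mgen m (A k) : ℝ))) x with hSdef
      have h1 : ∀ N, (‖f N x‖₊ : ℝ≥0∞) ≤ S N := by
        intro N
        rw [show (‖f N x‖₊ : ℝ≥0∞) = ENNReal.ofReal ‖f N x‖ from (ofReal_norm (f N x)).symm]
        have h2 : ‖f N x‖ ≤ ∑ j ∈ Finset.range N, ‖if A j + 1 ≤ N then g j x else 0‖ := by
          rw [hfdef]; exact norm_sum_le _ _
        refine le_trans (ENNReal.ofReal_le_ofReal h2) ?_
        rw [ENNReal.ofReal_sum_of_nonneg (fun j _ => norm_nonneg _)]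
        refine Finset.sum_le_sum fun j _ => ?_
        by_cases hx : x ∈ cyl m (A j) (fun _ => 0)
        · rw [Set.indicator_of_mem hx]
          refine ENNReal.ofReal_le_ofReal ?_
          by_cases hc : A j + 1 ≤ N
          · rw [if_pos hc]; exact hg_bound j x
          · rw [if_neg hc, norm_zero]; exact hpos j
        · rw [Set.indicator_of_notMem hx]
          have hg0 : g j x = 0 := by
            rw [hgdef]; exact Set.indicator_of_notMem hx _
          by_cases hc : A j + 1 ≤ N
          · rw [if_pos hc, hg0, norm_zero, ENNReal.ofReal_zero]
          · rw [if_neg hc, norm_zero, ENNReal.ofReal_zero]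
      have h3 : (⨆ N, (‖f N x‖₊ : ℝ≥0∞)) ^ p ≤ (⨆ N, S N) ^ p := by
        refine ENNReal.rpow_le_rpow ?_ hp0.le
        exact iSup_mono h1
      refine le_trans h3 ?_
      rw [ennreal_iSup_rpow hp0]
      refine iSup_le fun N => ?_
      refine le_trans (ennreal_sum_rpow_le hp0 hp1.le _ N) ?_
      refine le_trans (Finset.sum_le_sum fun k _ => ?_) (ENNReal.sum_le_tsum _)
      by_cases hx : x ∈ cyl m (A k) (fun _ => 0)
      · rw [Set.indicator_of_mem hx, Set.indicator_of_mem hx]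
      · rw [Set.indicator_of_notMem hx, Set.indicator_of_notMem hx,
          ENNReal.zero_rpow_of_pos hp0]
    -- integral of T2
    have hsummand : ∀ k, ∫⁻ x, Set.indicator (cyl m (A k) (fun _ => 0))
        (fun _ => ENNReal.ofReal (c k * (Mgen m (A k) : ℝ)) ^ p) x ∂μ = rr ^ k := by
      intro k
      rw [lintegral_indicator (measurableSet_cyl hm _ _), setLIntegral_const, hμ]
      have hMne : ((Mgen m (A k) : ℕ) : ℝ≥0∞) ≠ 0 := by
        exact_mod_cast (Mgen_pos hm (A k)).ne'
      have hM := hMApos k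
      have hck : (c k * (Mgen m (A k) : ℝ)) ^ p = (Mgen m (A k) : ℝ) * s2 ^ k := by
        have e1 : c k * (Mgen m (A k) : ℝ)
            = (Mgen m (A k) : ℝ) ^ (q+1) * ((1:ℝ)/2) ^ k := by
          rw [hcdef]
          simp only []
          rw [Real.rpow_add hM, Real.rpow_one, one_div, inv_pow]
          field_simp
        rw [e1, Real.mul_rpow (Real.rpow_nonneg hM.le _) (by positivity)]
        congr 1
        · rw [← Real.rpow_mul hM.le]
          have : (q+1)*p = 1 := by rw [hqdef, sub_add_cancel, one_div, inv_mul_cancel₀ hp0.ne']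
          rw [this, Real.rpow_one]
        · rw [hs2def, ← Real.rpow_natCast ((1:ℝ)/2) k, ← Real.rpow_mul (by norm_num),
            mul_comm (k:ℝ) p, Real.rpow_mul (by norm_num), Real.rpow_natCast]
      rw [ENNReal.ofReal_rpow_of_nonneg (hpos k) hp0.le, hck,
        ENNReal.ofReal_mul (Nat.cast_nonneg _), ENNReal.ofReal_natCast,
        ENNReal.ofReal_pow hs2nonneg, mul_comm ((Mgen m (A k) : ℕ) : ℝ≥0∞) (rr ^ k),
        mul_assoc, ENNReal.mul_inv_cancel hMne (ENNReal.natCast_ne_top _), mul_one]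
    have hT2int : ∫⁻ x, T2 x ∂μ = ∑' k, rr ^ k := by
      rw [hT2def, lintegral_tsum
        (fun k => (measurable_const.indicator (measurableSet_cyl hm _ _)).aemeasurable)]
      exact tsum_congr hsummand
    have hfin : ∫⁻ x, (⨆ N, (‖f N x‖₊ : ℝ≥0∞)) ^ p ∂μ ≤ (1 - rr)⁻¹ := by
      refine le_trans (lintegral_mono hptwise) ?_
      rw [hT2int, ENNReal.tsum_geometric]
    show (∫⁻ x, (⨆ n, (‖f n x‖₊ : ℝ≥0∞)) ^ p ∂μ) ^ (1/p) < ⊤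
    refine ENNReal.rpow_lt_top_of_nonneg (by positivity) ?_
    refine ne_top_of_le_ne_top ?_ hfin
    refine ENNReal.inv_ne_top.2 ?_
    intro hcontra
    rw [tsub_eq_zero_iff_le] at hcontra
    exact hrrlt.not_ge hcontra
  case lim =>
    have h2all : ∀ k, ENNReal.ofReal ((lam:ℝ)^q * 4^k) ≤
        ENNReal.ofReal ((nseq k : ℝ) ^ (1 / p - 1)) / ENNReal.ofReal (Φ (nseq k)) := by
      intro k
      cases k with
      | zero => exact hF2 0 1
      | succ k => rw [hnseqS]; exact hF2 _ _
    have hu : ∀ k, (2:ℝ≥0∞)^k ≤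
        ENNReal.ofReal ‖mfhat m μ f (Mgen m (A k))‖
          / ENNReal.ofReal (Φ (Mgen m (A k))) := by
      intro k
      rw [hfourier k, Complex.norm_real, Real.norm_eq_abs, abs_of_pos (hc_pos k)]
      by_cases hzero : Φ (Mgen m (A k)) ≤ 0
      · rw [ENNReal.ofReal_eq_zero.2 hzero,
          ENNReal.div_zero (ENNReal.ofReal_pos.2 (hc_pos k)).ne']
        exact le_top
      · push_neg at hzero
        have hΦle : Φ (Mgen m (A k)) ≤ Φ (nseq k) := hΦmono (hA1 k)
        have hΦn : 0 < Φ (nseq k) := lt_of_lt_of_le hzero hΦle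
        have hreal : (lam:ℝ)^q * 4^k * Φ (nseq k) ≤ (nseq k : ℝ)^q := by
          have hden0 : ENNReal.ofReal (Φ (nseq k)) ≠ 0 := (ENNReal.ofReal_pos.2 hΦn).ne'
          have h3 := (ENNReal.le_div_iff_mul_le (Or.inl hden0)
            (Or.inl ENNReal.ofReal_ne_top)).1 (h2all k)
          rw [← ENNReal.ofReal_mul (by positivity)] at h3
          have h4 := (ENNReal.ofReal_le_ofReal_iff
            (Real.rpow_nonneg (Nat.cast_nonneg _) _)).1 h3
          rw [← hqdef] at h4
          exact h4
        have hlamposR : (0:ℝ) < lam := by exact_mod_cast (by omega : 0 < lam)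
        have hMA : (nseq k : ℝ) ≤ lam * (Mgen m (A k) : ℝ) := by
          have h3 := hA2 k
          have h4 : Mgen m (A k + 1) = m (A k) * Mgen m (A k) := rfl
          have h5 : m (A k) ≤ lam := hlam (A k)
          have h6 : nseq k ≤ lam * Mgen m (A k) := by
            calc nseq k ≤ m (A k) * Mgen m (A k) := by omega
            _ ≤ lam * Mgen m (A k) := Nat.mul_le_mul_right _ h5
          exact_mod_cast h6
        have hck : 2^k * Φ (Mgen m (A k)) ≤ c k := by
          have h6 : ((nseq k : ℝ)/lam) ≤ (Mgen m (A k):ℝ) := by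
            rw [div_le_iff₀ hlamposR]; linarith [hMA]
          have h7 : ((nseq k:ℝ)/lam)^q ≤ (Mgen m (A k):ℝ)^q :=
            Real.rpow_le_rpow (by positivity) h6 hq.le
          have h8 : ((nseq k:ℝ)/lam)^q = (nseq k:ℝ)^q / (lam:ℝ)^q :=
            Real.div_rpow (Nat.cast_nonneg _) hlamposR.le q
          have hlamq : (0:ℝ) < (lam:ℝ)^q := Real.rpow_pos_of_pos hlamposR q
          have h44 : (4:ℝ)^k = 2^k * 2^k := by rw [← mul_pow]; norm_num
          calc (2:ℝ)^k * Φ (Mgen m (A k)) ≤ 2^k * Φ (nseq k) := by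
                have h2k : (0:ℝ) ≤ 2^k := by positivity
                exact mul_le_mul_of_nonneg_left hΦle h2k
          _ = (lam:ℝ)^q * 4^k * Φ (nseq k) / (lam:ℝ)^q / 2^k := by
                field_simp
                rw [h44]; ring
          _ ≤ (nseq k:ℝ)^q / (lam:ℝ)^q / 2^k := by gcongr
          _ = ((nseq k:ℝ)/lam)^q / 2^k := by rw [h8]
          _ ≤ (Mgen m (A k):ℝ)^q / 2^k := by gcongr
          _ = c k := rfl
        rw [ENNReal.le_div_iff_mul_le (Or.inl (ENNReal.ofReal_pos.2 hzero).ne')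
          (Or.inl ENNReal.ofReal_ne_top)]
        calc (2:ℝ≥0∞)^k * ENNReal.ofReal (Φ (Mgen m (A k)))
            = ENNReal.ofReal ((2:ℝ)^k * Φ (Mgen m (A k))) := by
              rw [ENNReal.ofReal_mul (by positivity), ENNReal.ofReal_pow (by norm_num),
                ENNReal.ofReal_ofNat]
        _ ≤ ENNReal.ofReal (c k) := ENNReal.ofReal_le_ofReal hck
    rw [Filter.limsup_eq_iInf_iSup_of_nat, iInf_eq_top]
    intro N
    apply top_unique
    rw [← ENNReal.iSup_natCast]
    refine iSup_le fun n => ?_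
    have hnk : (n:ℝ≥0∞) ≤ 2 ^ (max n N) := by
      have h1 : n ≤ 2 ^ (max n N) :=
        le_trans (le_max_left n N) Nat.lt_two_pow_self.le
      calc (n:ℝ≥0∞) ≤ ((2 ^ (max n N) : ℕ) : ℝ≥0∞) := by exact_mod_cast h1
      _ = 2 ^ (max n N) := by push_cast; rfl
    have hNM : N ≤ Mgen m (A (max n N)) := by
      have h1 : N ≤ max n N := le_max_right n N
      have h2 := hAk (max n N)
      have h3 := lt_Mgen hm (A (max n N))
      omega
    refine le_trans hnk (le_trans (hu (max n N)) ?_)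
    refine le_iSup_of_le (Mgen m (A (max n N))) ?_
    rw [iSup_pos hNM]

end
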